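/- Let H be the bicyclic monoid B = ⟨p, q | pq = 1⟩. Then x·(q^a p^b)·y = 1 in B if and only if x = p^{a+i} and y = q^{b+i} for some i ≥ 0. Consequently, for the action α of B on Z^ω given by right-shift-with-zero for q and left-shift for p, the coarse equivalence relation satisfies s ∼_α^{q^a p^b} s' if and only if s_n = s'_n for all n ≥ a. -/
import Mathlib


/-- The bicyclic monoid B = ⟨p, q | pq = 1⟩ in normal form: the pair (a, b) represents
q^a p^b, with multiplication
q^a p^b · q^{a'} p^{b'} = q^{a+a'-min(b,a')} p^{b+b'-min(b,a')} and unit (0,0). -/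
def bmul (x y : ℕ × ℕ) : ℕ × ℕ :=
  (x.1 + y.1 - min x.2 y.1, x.2 + y.2 - min x.2 y.1)

/-- The element q^a p^b. -/
def qp (a b : ℕ) : ℕ × ℕ := (a, b)

/-- The action of the bicyclic monoid on ℤ^ω determined by α(q,s)_n = s_{n-1} for n > 0 and
0 for n = 0, and α(p,s)_n = s_{n+1}; on the normal form q^a p^b it is
α(q^a p^b, s)_n = s_{n-a+b} for n ≥ a and 0 otherwise. -/
def bact (w : ℕ × ℕ) (s : ℕ → ℤ) : ℕ → ℤ :=
  fun n => if w.1 ≤ n then s (n - w.1 + w.2) else 0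

lemma bicyclic_part1 (x y : ℕ × ℕ) (a b : ℕ) :
    bmul (bmul x (qp a b)) y = (0, 0) ↔
      ∃ i : ℕ, x = qp 0 (a + i) ∧ y = qp (b + i) 0 := by
  obtain ⟨x1, x2⟩ := x
  obtain ⟨y1, y2⟩ := y
  simp only [bmul, qp, Prod.mk.injEq, Prod.ext_iff]
  constructor
  · rintro ⟨h1, h2⟩
    refine ⟨x2 - a, ?_, ?_, ?_⟩ <;> omega
  · rintro ⟨i, ⟨hx1, hx2⟩, hy1, hy2⟩
    omega

/-- In the bicyclic monoid B = ⟨p, q | pq = 1⟩ one has x·(q^a p^b)·y = 1 iff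
x = p^{a+i} and y = q^{b+i} for some i ≥ 0.  Consequently, for the shift action α of B on
ℤ^ω, the coarse equivalence relation (s ∼_α^h s' iff α(x,s) = α(x,s') whenever x·h·y = 1)
satisfies s ∼_α^{q^a p^b} s' iff s_n = s'_n for all n ≥ a. -/
theorem bicyclic_coarse_equivalence :
    (∀ (x y : ℕ × ℕ) (a b : ℕ),
      bmul (bmul x (qp a b)) y = (0, 0) ↔
        ∃ i : ℕ, x = qp 0 (a + i) ∧ y = qp (b + i) 0) ∧
    ∀ (a b : ℕ) (s s' : ℕ → ℤ),
      (∀ x y : ℕ × ℕ, bmul (bmul x (qp a b)) y = (0, 0) → bact x s = bact x s') ↔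
        ∀ n : ℕ, a ≤ n → s n = s' n := by
  refine ⟨bicyclic_part1, fun a b s s' => ?_⟩
  constructor
  · intro h n hn
    have hx : bmul (bmul (qp 0 a) (qp a b)) (qp b 0) = (0, 0) := by
      rw [bicyclic_part1]; exact ⟨0, by simp [qp], by simp [qp]⟩
    have := congrFun (h _ _ hx) (n - a)
    simpa [bact, qp, Nat.sub_add_cancel hn] using this
  · intro h x y hxy
    obtain ⟨i, hx, hy⟩ := (bicyclic_part1 x y a b).mp hxy
    subst hx
    funext n
    simp only [bact, qp, Nat.zero_le, if_true]
    exact h _ (by omega)
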